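/- If (x₀, μ) ≠ (x₀', μ') in ℝ² and σ, t₁, t₂ > 0 with t₁ ≠ t₂, then the infinite product measures γ_{(x₀,μ)}^ℕ and γ_{(x₀',μ')}^ℕ on (ℝ²)^ℕ are mutually singular, where γ_{(x₀,μ)} is the product of N(x₀+μt₁, σ²t₁) and N(x₀+μt₂, σ²t₂). -/

import Mathlib

open MeasureTheory ProbabilityTheory Filter

/-- `Q` is the countable product `ν^ℕ` on the sequence space, characterized by its
finite-dimensional marginals. -/
def IsInfiniteProduct {α : Type*} [MeasurableSpace α] (ν : Measure α)
    (Q : Measure (ℕ → α)) : Prop :=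
  ∀ n : ℕ, Measure.map (fun x (i : Fin n) => x (i : ℕ)) Q = Measure.pi fun _ : Fin n => ν

/-- The two-time Gaussian law of the Wiener process with drift with parameters
`(x₀, μ)`: product on `ℝ²` of `N(x₀+μt₁, σ²t₁)` and `N(x₀+μt₂, σ²t₂)`. -/
noncomputable def twoTimeLaw (σ t₁ t₂ x₀ μ : ℝ) : Measure (ℝ × ℝ) :=
  (ProbabilityTheory.gaussianReal (x₀ + μ * t₁) ((σ ^ 2 * t₁).toNNReal)).prod
    (ProbabilityTheory.gaussianReal (x₀ + μ * t₂) ((σ ^ 2 * t₂).toNNReal))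

open scoped ENNReal NNReal Real Topology

/-! ### Mean and integrability of the real Gaussian distribution -/

lemma integrable_id_gaussianReal0 (v : ℝ≥0) : Integrable (fun x => x) (gaussianReal 0 v) := by
  by_cases hv : v = 0
  · simp only [hv, gaussianReal_zero_var]
    refine (integrable_const (0:ℝ)).congr ?_
    rw [MeasureTheory.ae_dirac_eq]
    exact Filter.eventually_pure.2 rfl
  have hvpos : (0:ℝ) < v := by exact_mod_cast zero_lt_iff.mpr hv
  have hb : (0:ℝ) < (2 * (v:ℝ))⁻¹ := by positivity
  rw [gaussianReal_of_var_ne_zero _ hv, gaussianPDF_def,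
    integrable_withDensity_iff ((measurable_gaussianPDFReal 0 v).ennreal_ofReal)
      (Filter.Eventually.of_forall fun _ => ENNReal.ofReal_lt_top)]
  have H := integrable_rpow_mul_exp_neg_mul_sq hb (s := 1) (by norm_num)
  simp only [Real.rpow_one] at H
  have := (H.const_mul (√(2 * π * v))⁻¹)
  refine this.congr ?_
  refine Filter.Eventually.of_forall fun x => ?_
  show _ = x * (ENNReal.ofReal (gaussianPDFReal 0 v x)).toReal
  rw [ENNReal.toReal_ofReal (gaussianPDFReal_nonneg _ _ _)]
  simp only [gaussianPDFReal, sub_zero]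
  ring_nf

lemma gaussianReal0_map_neg (v : ℝ≥0) :
    (gaussianReal 0 v).map (fun x => -x) = gaussianReal 0 v := by
  have h := gaussianReal_map_const_mul (μ := 0) (v := v) (-1)
  have h1 : (NNReal.mk ((-1:ℝ)^2) (sq_nonneg _)) = 1 := by ext; norm_num
  rw [h1, one_mul, mul_zero] at h
  simpa [neg_one_mul] using h

lemma integral_id_gaussianReal0 (v : ℝ≥0) : ∫ x, x ∂(gaussianReal 0 v) = 0 := by
  have h : ∫ x, x ∂(gaussianReal 0 v) = - ∫ x, x ∂(gaussianReal 0 v) := by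
    conv_lhs => rw [← gaussianReal0_map_neg v]
    rw [integral_map (f := fun x => x) measurable_neg.aemeasurable aestronglyMeasurable_id]
    exact integral_neg fun x => x
  linarith

lemma integrable_id_gaussianReal (m : ℝ) (v : ℝ≥0) :
    Integrable (fun x => x) (gaussianReal m v) := by
  have hrep : gaussianReal m v = (gaussianReal 0 v).map (· + m) := by
    rw [gaussianReal_map_add_const, zero_add]
  rw [hrep, integrable_map_measure (g := fun x => x) aestronglyMeasurable_id
    (measurable_add_const m).aemeasurable]
  exact (integrable_id_gaussianReal0 v).add (integrable_const m)

lemma integral_id_gaussianReal (m : ℝ) (v : ℝ≥0) : ∫ x, x ∂(gaussianReal m v) = m := by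
  have hrep : gaussianReal m v = (gaussianReal 0 v).map (· + m) := by
    rw [gaussianReal_map_add_const, zero_add]
  rw [hrep, integral_map (f := fun x => x)
    (measurable_add_const m).aemeasurable aestronglyMeasurable_id]
  rw [integral_add (integrable_id_gaussianReal0 v) (integrable_const m)]
  simp [integral_id_gaussianReal0 v]

/-! ### Marginals of the infinite product -/

lemma map_eval_pi' {α : Type*} [MeasurableSpace α] (ν : Measure α) [IsProbabilityMeasure ν]
    {n : ℕ} (j : Fin n) :
    (Measure.pi fun _ : Fin n => ν).map (fun y => y j) = ν := by
  classical
  ext s hs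
  rw [Measure.map_apply (measurable_pi_apply _) hs]
  have hpre : (fun y : Fin n → α => y j) ⁻¹' s
      = Set.pi Set.univ (Function.update (fun _ => Set.univ) j s) := Set.eval_preimage
  rw [hpre, Measure.pi_pi]
  have h1 : ∀ k, ν (Function.update (fun _ => (Set.univ : Set α)) j s k)
      = Function.update (fun _ => (1:ℝ≥0∞)) j (ν s) k := by
    intro k
    rcases eq_or_ne k j with rfl | hk
    · simp
    · simp [Function.update_apply, hk]
  rw [Finset.prod_congr rfl fun k _ => h1 k,
    Finset.prod_update_of_mem (Finset.mem_univ j)]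
  simp

lemma map_pair_eval_pi {α : Type*} [MeasurableSpace α] (ν : Measure α) [IsProbabilityMeasure ν]
    {n : ℕ} (i j : Fin n) (hij : i ≠ j) :
    (Measure.pi fun _ : Fin n => ν).map (fun y => (y i, y j)) = ν.prod ν := by
  classical
  refine ((Measure.prod_eq (μ := ν) (ν := ν) fun s t hs ht => ?_)).symm
  rw [Measure.map_apply ((measurable_pi_apply i).prodMk (measurable_pi_apply j)) (hs.prod ht)]
  have hpre : (fun y : Fin n → α => (y i, y j)) ⁻¹' (s ×ˢ t)
      = Set.pi Set.univ
          (Function.update (Function.update (fun _ => Set.univ) i s) j t) := by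
    ext y
    simp only [Set.mem_preimage, Set.mem_prod, Set.mem_pi, Set.mem_univ, forall_true_left]
    constructor
    · rintro ⟨h1, h2⟩ k
      rcases eq_or_ne k j with rfl | hkj
      · simpa using h2
      rcases eq_or_ne k i with rfl | hki
      · simp [Function.update_apply, hkj, h1]
      · simp [Function.update_apply, hkj, hki]
    · intro h
      refine ⟨?_, ?_⟩
      · have := h i
        simpa [Function.update_apply, hij] using this
      · have := h j
        simpa using this
  rw [hpre, Measure.pi_pi]
  have h1 : ∀ k, ν (Function.update (Function.update (fun _ => (Set.univ : Set α)) i s) j t k)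
      = Function.update (Function.update (fun _ => (1:ℝ≥0∞)) i (ν s)) j (ν t) k := by
    intro k
    rcases eq_or_ne k j with rfl | hkj
    · simp
    rcases eq_or_ne k i with rfl | hki
    · simp [Function.update_apply, hkj]
    · simp [Function.update_apply, hkj, hki]
  rw [Finset.prod_congr rfl fun k _ => h1 k,
    Finset.prod_update_of_mem (Finset.mem_univ j),
    Finset.prod_update_of_mem (by simp [hij] : i ∈ Finset.univ \ {j})]
  simp [mul_comm]

lemma map_eval_of_infinite {α : Type*} [MeasurableSpace α] {ν : Measure α}
    [IsProbabilityMeasure ν] {Q : Measure (ℕ → α)} (hQ : IsInfiniteProduct ν Q) (i : ℕ) :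
    Q.map (fun x => x i) = ν := by
  have hcomp : (fun x : ℕ → α => x i)
      = (fun y : Fin (i+1) → α => y ⟨i, Nat.lt_succ_self i⟩)
        ∘ (fun x (k : Fin (i+1)) => x (k : ℕ)) := rfl
  have hm1 : Measurable (fun x : ℕ → α => fun k : Fin (i+1) => x (k : ℕ)) := by fun_prop
  have hm2 : Measurable (fun y : Fin (i+1) → α => y ⟨i, Nat.lt_succ_self i⟩) :=
    measurable_pi_apply _
  rw [hcomp, ← Measure.map_map hm2 hm1, hQ (i+1), map_eval_pi']

lemma map_pair_of_infinite {α : Type*} [MeasurableSpace α] {ν : Measure α}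
    [IsProbabilityMeasure ν] {Q : Measure (ℕ → α)} (hQ : IsInfiniteProduct ν Q)
    {i j : ℕ} (hij : i ≠ j) :
    Q.map (fun x => (x i, x j)) = ν.prod ν := by
  have hi : i < max i j + 1 := Nat.lt_succ_of_le (le_max_left _ _)
  have hj : j < max i j + 1 := Nat.lt_succ_of_le (le_max_right _ _)
  have hcomp : (fun x : ℕ → α => (x i, x j))
      = (fun y : Fin (max i j + 1) → α => (y ⟨i, hi⟩, y ⟨j, hj⟩))
        ∘ (fun x (k : Fin (max i j + 1)) => x (k : ℕ)) := rfl
  have hm1 : Measurable (fun x : ℕ → α => fun k : Fin (max i j + 1) => x (k : ℕ)) := by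
    fun_prop
  have hm2 : Measurable (fun y : Fin (max i j + 1) → α => (y ⟨i, hi⟩, y ⟨j, hj⟩)) :=
    (measurable_pi_apply _).prodMk (measurable_pi_apply _)
  rw [hcomp, ← Measure.map_map hm2 hm1, hQ (max i j + 1),
    map_pair_eval_pi ν _ _ (by simp [Fin.ext_iff, hij])]

/-! ### Integrals of the coordinates of a product measure -/

section prodHelpers
variable {μ1 μ2 : Measure ℝ} [IsProbabilityMeasure μ1] [IsProbabilityMeasure μ2]

lemma map_fst_prod' : Measure.map Prod.fst (μ1.prod μ2) = μ1 := by simp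

lemma map_snd_prod' : Measure.map Prod.snd (μ1.prod μ2) = μ2 := by simp

lemma integrable_fst_prod (h : Integrable (fun x => x) μ1) :
    Integrable (fun p : ℝ × ℝ => p.1) (μ1.prod μ2) := by
  rw [← map_fst_prod' (μ1 := μ1) (μ2 := μ2)] at h
  exact (integrable_map_measure aestronglyMeasurable_id measurable_fst.aemeasurable).1 h

lemma integrable_snd_prod (h : Integrable (fun x => x) μ2) :
    Integrable (fun p : ℝ × ℝ => p.2) (μ1.prod μ2) := by
  rw [← map_snd_prod' (μ1 := μ1) (μ2 := μ2)] at h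
  exact (integrable_map_measure aestronglyMeasurable_id measurable_snd.aemeasurable).1 h

lemma integral_fst_prod : ∫ p, p.1 ∂(μ1.prod μ2) = ∫ x, x ∂μ1 := by
  conv_rhs => rw [← map_fst_prod' (μ1 := μ1) (μ2 := μ2)]
  rw [integral_map (f := fun x => x) measurable_fst.aemeasurable aestronglyMeasurable_id]

lemma integral_snd_prod : ∫ p, p.2 ∂(μ1.prod μ2) = ∫ x, x ∂μ2 := by
  conv_rhs => rw [← map_snd_prod' (μ1 := μ1) (μ2 := μ2)]
  rw [integral_map (f := fun x => x) measurable_snd.aemeasurable aestronglyMeasurable_id]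

end prodHelpers

/-! ### Strong law of large numbers on the sequence space -/

lemma slln_of_infinite {ν : Measure (ℝ × ℝ)} [IsProbabilityMeasure ν]
    {Q : Measure (ℕ → ℝ × ℝ)} [IsProbabilityMeasure Q] (hQ : IsInfiniteProduct ν Q)
    {f : ℝ × ℝ → ℝ} (hf : Measurable f) (hint : Integrable f ν) :
    ∀ᵐ x ∂Q, Tendsto (fun n : ℕ => (∑ i ∈ Finset.range n, f (x i)) / n) atTop
      (𝓝 (∫ p, f p ∂ν)) := by
  have hX : ∀ i : ℕ, Measurable fun x : ℕ → ℝ × ℝ => f (x i) :=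
    fun i => hf.comp (measurable_pi_apply i)
  have hmapi : ∀ i : ℕ, Q.map (fun x => f (x i)) = ν.map f := by
    intro i
    rw [show (fun x : ℕ → ℝ × ℝ => f (x i)) = f ∘ (fun x => x i) from rfl,
      ← Measure.map_map hf (measurable_pi_apply i), map_eval_of_infinite hQ i]
  have hint0 : Integrable (fun x : ℕ → ℝ × ℝ => f (x 0)) Q := by
    rw [← map_eval_of_infinite hQ 0] at hint
    exact (integrable_map_measure hf.aestronglyMeasurable
      (measurable_pi_apply 0).aemeasurable).1 hint
  have hindep : Pairwise (Function.onFun (fun g h => IndepFun g h Q) fun i (x : ℕ → ℝ × ℝ) => f (x i)) := by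
    intro i j hij
    rw [Function.onFun]
    rw [indepFun_iff_map_prod_eq_prod_map_map (hX i).aemeasurable (hX j).aemeasurable]
    have hcomp : (fun x : ℕ → ℝ × ℝ => (f (x i), f (x j)))
        = (Prod.map f f) ∘ (fun x => (x i, x j)) := rfl
    rw [hcomp, ← Measure.map_map (hf.prodMap hf)
      ((measurable_pi_apply i).prodMk (measurable_pi_apply j)),
      map_pair_of_infinite hQ hij, hmapi i, hmapi j,
      Measure.map_prod_map _ _ hf hf]
  have hident : ∀ i : ℕ, IdentDistrib (fun x : ℕ → ℝ × ℝ => f (x i))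
      (fun x : ℕ → ℝ × ℝ => f (x 0)) Q Q :=
    fun i => ⟨(hX i).aemeasurable, (hX 0).aemeasurable, by rw [hmapi i, hmapi 0]⟩
  have H := strong_law_ae_real _ hint0 hindep hident
  have hEq : ∫ x, f (x 0) ∂Q = ∫ p, f p ∂ν := by
    conv_rhs => rw [← map_eval_of_infinite hQ 0]
    rw [integral_map (measurable_pi_apply 0).aemeasurable hf.aestronglyMeasurable]
  rwa [hEq] at H

lemma mutuallySingular_of_means {ν ν' : Measure (ℝ × ℝ)}
    [IsProbabilityMeasure ν] [IsProbabilityMeasure ν']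
    {Q Q' : Measure (ℕ → ℝ × ℝ)} [IsProbabilityMeasure Q] [IsProbabilityMeasure Q']
    (hQ : IsInfiniteProduct ν Q) (hQ' : IsInfiniteProduct ν' Q')
    {f : ℝ × ℝ → ℝ} (hf : Measurable f) (hint : Integrable f ν) (hint' : Integrable f ν')
    (hmean : ∫ p, f p ∂ν ≠ ∫ p, f p ∂ν') : Q.MutuallySingular Q' := by
  set A := {x : ℕ → ℝ × ℝ | Tendsto (fun n : ℕ => (∑ i ∈ Finset.range n, f (x i)) / n) atTop
    (𝓝 (∫ p, f p ∂ν))} with hAdef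
  have hA : MeasurableSet A :=
    measurableSet_tendsto _ fun n =>
      (Finset.measurable_sum _ fun i _ => hf.comp (measurable_pi_apply i)).div_const _
  have H := slln_of_infinite hQ hf hint
  have H' := slln_of_infinite hQ' hf hint'
  refine ⟨Aᶜ, hA.compl, ?_, ?_⟩
  · have : Q {x | ¬ x ∈ A} = 0 := ae_iff.mp H
    exact this
  · rw [compl_compl]
    refine measure_mono_null (t := {x | ¬ Tendsto
      (fun n : ℕ => (∑ i ∈ Finset.range n, f (x i)) / n) atTop (𝓝 (∫ p, f p ∂ν'))})
      (fun x hx hx' => hmean (tendsto_nhds_unique hx hx')) (ae_iff.mp H')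

lemma twoTimeLaw_def (σ t₁ t₂ x₀ μ : ℝ) : twoTimeLaw σ t₁ t₂ x₀ μ
    = (gaussianReal (x₀ + μ * t₁) ((σ ^ 2 * t₁).toNNReal)).prod
      (gaussianReal (x₀ + μ * t₂) ((σ ^ 2 * t₂).toNNReal)) := rfl

instance twoTimeLaw_prob (σ t₁ t₂ x₀ μ : ℝ) :
    IsProbabilityMeasure (twoTimeLaw σ t₁ t₂ x₀ μ) := by
  rw [twoTimeLaw_def]; infer_instance

/-- For distinct parameter pairs `(x₀, μ) ≠ (x₀', μ')` the infinite products of the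
two-time Gaussian laws on `(ℝ²)^ℕ` are mutually singular. -/
theorem stmt8 (σ t₁ t₂ : ℝ) (hσ : 0 < σ) (ht₁ : 0 < t₁) (ht₂ : 0 < t₂) (hne : t₁ ≠ t₂)
    (x₀ μ x₀' μ' : ℝ) (hparam : (x₀, μ) ≠ (x₀', μ'))
    (Q Q' : Measure (ℕ → ℝ × ℝ))
    [IsProbabilityMeasure Q] [IsProbabilityMeasure Q']
    (hQ : IsInfiniteProduct (twoTimeLaw σ t₁ t₂ x₀ μ) Q)
    (hQ' : IsInfiniteProduct (twoTimeLaw σ t₁ t₂ x₀' μ') Q') :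
    Q.MutuallySingular Q' := by
  by_cases h1 : x₀ + μ * t₁ = x₀' + μ' * t₁
  · -- then the means at time t₂ must differ
    have h2 : x₀ + μ * t₂ ≠ x₀' + μ' * t₂ := by
      intro h2
      apply hparam
      have h3 : (μ - μ') * (t₁ - t₂) = 0 := by linear_combination h1 - h2
      have hμ : μ = μ' := by
        rcases mul_eq_zero.1 h3 with h | h
        · linarith
        · exact absurd (by linarith) hne
      have hx : x₀ = x₀' := by
        rw [hμ] at h1
        linarith
      rw [hμ, hx]
    refine mutuallySingular_of_means hQ hQ' (f := fun p : ℝ × ℝ => p.2)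
      measurable_snd ?_ ?_ ?_
    · rw [twoTimeLaw_def]
      exact integrable_snd_prod (integrable_id_gaussianReal _ _)
    · rw [twoTimeLaw_def]
      exact integrable_snd_prod (integrable_id_gaussianReal _ _)
    · rw [twoTimeLaw_def, twoTimeLaw_def, integral_snd_prod, integral_snd_prod,
        _root_.integral_id_gaussianReal, _root_.integral_id_gaussianReal]
      exact h2
  · refine mutuallySingular_of_means hQ hQ' (f := fun p : ℝ × ℝ => p.1)
      measurable_fst ?_ ?_ ?_
    · rw [twoTimeLaw_def]
      exact integrable_fst_prod (integrable_id_gaussianReal _ _)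
    · rw [twoTimeLaw_def]
      exact integrable_fst_prod (integrable_id_gaussianReal _ _)
    · rw [twoTimeLaw_def, twoTimeLaw_def, integral_fst_prod, integral_fst_prod,
        _root_.integral_id_gaussianReal, _root_.integral_id_gaussianReal]
      exact h1
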